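/- Let V_n denote the nth constrained quantization error for the Cantor measure P with constraints S_j = {(x,1/j) : 0 ≤ x ≤ 1}, and suppose an optimal set α_n ⊆ S_n of n points splits as β₁ = U_n(α_n) ∩ [0,1/3] with card(β₁) = n₁ and β₂ = U_n(α_n) ∩ [2/3,1] with card(β₂) = n - n₁. Then V_n = (1/18)(V_{n₁} + V_{n-n₁} - 1/n₁² - 1/(n-n₁)²) + 1/n². -/

import Mathlib

open MeasureTheory Real Set Filter
open scoped ENNReal Topology

noncomputable section

/-- First generating map of the Cantor set. -/
def T1 (x : ℝ) : ℝ := x / 3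

/-- Second generating map of the Cantor set. -/
def T2 (x : ℝ) : ℝ := x / 3 + 2 / 3

/-- Map indexed by `Fin 2`. -/
def Tm : Fin 2 → ℝ → ℝ := ![T1, T2]

/-- Composition `T_σ = T_{σ₁} ∘ ⋯ ∘ T_{σ_k}` for a word over `{1,2}` (as a list over `Fin 2`). -/
def Tw (l : List (Fin 2)) : ℝ → ℝ := l.foldr (fun i g => Tm i ∘ g) id

/-- Squared Euclidean distance between `x ∈ ℝ` (identified with `(x,0)`) and `(a,b) ∈ ℝ²`. -/
def rho (x : ℝ) (p : ℝ × ℝ) : ℝ := (x - p.1) ^ 2 + p.2 ^ 2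

/-- Distortion error of a set `α ⊆ ℝ²` for `P`. -/
def distortion (P : Measure ℝ) (α : Set (ℝ × ℝ)) : ℝ := ∫ x, ⨅ a : α, rho x (a : ℝ × ℝ) ∂P

/-- The constraint `S_j = {(x, 1/j) : 0 ≤ x ≤ 1}`. -/
def Sj (j : ℕ) : Set (ℝ × ℝ) := {p | p.1 ∈ Icc (0 : ℝ) 1 ∧ p.2 = 1 / (j : ℝ)}

/-- The `n`th constrained quantization error for `P` with respect to the family `Sj`. -/
def Vc (P : Measure ℝ) (n : ℕ) : ℝ :=
  sInf {e : ℝ | ∃ α : Finset (ℝ × ℝ), α.Nonempty ∧ α.card ≤ n ∧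
    (↑α : Set (ℝ × ℝ)) ⊆ ⋃ j ∈ Finset.Icc 1 n, Sj j ∧ e = distortion P (↑α : Set (ℝ × ℝ))}

set_option linter.unusedSectionVars false
set_option maxHeartbeats 1000000


lemma measurable_T1 : Measurable T1 := (continuous_id.div_const 3).measurable
lemma measurable_T2 : Measurable T2 := ((continuous_id.div_const 3).add continuous_const).measurable

variable (P : Measure ℝ) [IsProbabilityMeasure P]

lemma meas_eq (hP : P = (1 / 2 : ℝ≥0∞) • P.map T1 + (1 / 2 : ℝ≥0∞) • P.map T2)
    (s : Set ℝ) (hs : MeasurableSet s) :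
    P s = 1/2 * P (T1 ⁻¹' s) + 1/2 * P (T2 ⁻¹' s) := by
  conv_lhs => rw [hP]
  simp [Measure.add_apply, Measure.smul_apply, Measure.map_apply measurable_T1 hs,
    Measure.map_apply measurable_T2 hs, smul_eq_mul]

lemma Ioi_step (hP : P = (1 / 2 : ℝ≥0∞) • P.map T1 + (1 / 2 : ℝ≥0∞) • P.map T2) (a : ℝ) :
    P (Ioi a) = 1/2 * P (Ioi (3*a)) + 1/2 * P (Ioi (3*a-2)) := by
  have := meas_eq P hP (Ioi a) measurableSet_Ioi
  have h1 : T1 ⁻¹' Ioi a = Ioi (3*a) := by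
    ext x; simp [T1, mem_Ioi]; constructor <;> intro h <;> linarith
  have h2 : T2 ⁻¹' Ioi a = Ioi (3*a-2) := by
    ext x; simp [T2, mem_Ioi]; constructor <;> intro h <;> linarith
  rw [h1, h2] at this; exact this

set_option linter.unusedSectionVars false

lemma Iio_step (hP : P = (1 / 2 : ℝ≥0∞) • P.map T1 + (1 / 2 : ℝ≥0∞) • P.map T2) (a : ℝ) :
    P (Iio a) = 1/2 * P (Iio (3*a)) + 1/2 * P (Iio (3*a-2)) := by
  have := meas_eq P hP (Iio a) measurableSet_Iio
  have h1 : T1 ⁻¹' Iio a = Iio (3*a) := by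
    ext x; simp [T1, mem_Iio]; constructor <;> intro h <;> linarith
  have h2 : T2 ⁻¹' Iio a = Iio (3*a-2) := by
    ext x; simp [T2, mem_Iio]; constructor <;> intro h <;> linarith
  rw [h1, h2] at this; exact this

-- measure of Ioi tends to 0 along ℕ
lemma Ioi_tendsto : Tendsto (fun m : ℕ => P (Ioi (m : ℝ))) atTop (𝓝 0) := by
  have h := tendsto_measure_iInter_atTop (μ := P)
    (fun m : ℕ => (measurableSet_Ioi (a := (m:ℝ))).nullMeasurableSet)
    (fun i j hij => Ioi_subset_Ioi (by exact_mod_cast hij)) ⟨0, measure_ne_top _ _⟩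
  have : ⋂ m : ℕ, Ioi ((m:ℝ)) = ∅ := by
    apply eq_empty_iff_forall_notMem.2
    intro x hx
    simp only [mem_iInter, mem_Ioi] at hx
    obtain ⟨m, hm⟩ := exists_nat_gt x
    exact absurd (hx m) (not_lt.2 hm.le)
  rwa [this, measure_empty] at h

lemma Iio_tendsto : Tendsto (fun m : ℕ => P (Iio (-(m : ℝ)))) atTop (𝓝 0) := by
  have h := tendsto_measure_iInter_atTop (μ := P)
    (fun m : ℕ => (measurableSet_Iio (a := (-(m:ℝ)))).nullMeasurableSet)
    (fun i j hij => Iio_subset_Iio (neg_le_neg (by exact_mod_cast hij)))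
    ⟨0, measure_ne_top _ _⟩
  have : ⋂ m : ℕ, Iio (-(m:ℝ)) = ∅ := by
    apply eq_empty_iff_forall_notMem.2
    intro x hx
    simp only [mem_iInter, mem_Iio] at hx
    obtain ⟨m, hm⟩ := exists_nat_gt (-x)
    have := hx m; linarith
  rwa [this, measure_empty] at h

lemma half_fix {x : ℝ≥0∞} (hx : x ≠ ⊤) (h : x = 2⁻¹ * x) : x = 0 := by
  have hr : x.toReal = 1/2 * x.toReal := by
    conv_lhs => rw [h]
    rw [ENNReal.toReal_mul]
    norm_num
  have : x.toReal = 0 := by linarith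
  rwa [ENNReal.toReal_eq_zero_iff, or_iff_left hx] at this

lemma Ioi_zero (hP : P = (1 / 2 : ℝ≥0∞) • P.map T1 + (1 / 2 : ℝ≥0∞) • P.map T2) :
    P (Ioi 1) = 0 := by
  -- first, for a > 1, P (Ioi a) = 0
  have key : ∀ a : ℝ, 1 < a → P (Ioi a) = 0 := by
    intro a ha
    have step : ∀ b : ℝ, P (Ioi b) ≤ P (Ioi (3*b-2)) := by
      intro b
      rw [Ioi_step P hP b]
      have h1 : P (Ioi (3*b)) ≤ P (Ioi (3*b-2)) :=
        measure_mono (Ioi_subset_Ioi (by linarith))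
      calc 1/2 * P (Ioi (3*b)) + 1/2 * P (Ioi (3*b-2))
          ≤ 1/2 * P (Ioi (3*b-2)) + 1/2 * P (Ioi (3*b-2)) := by
            gcongr
        _ = P (Ioi (3*b-2)) := by
            rw [← add_mul]
            norm_num [ENNReal.inv_two_add_inv_two]
    -- iterate
    have iter : ∀ k : ℕ, P (Ioi a) ≤ P (Ioi (3^k * (a-1) + 1)) := by
      intro k
      induction k with
      | zero => simp
      | succ k ih =>
        refine ih.trans ((step _).trans_eq ?_)
        congr 1
        ring_nf
      -- 3*(3^k*(a-1)+1)-2 = 3^(k+1)*(a-1)+1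
    have bound : ∀ m : ℕ, P (Ioi a) ≤ P (Ioi (m : ℝ)) := by
      intro m
      obtain ⟨k, hk⟩ := pow_unbounded_of_one_lt ((m:ℝ) / (a-1)) (by norm_num : (1:ℝ) < 3)
      have hk' : (m : ℝ) ≤ 3^k * (a-1) + 1 := by
        have h1 : (m:ℝ) / (a-1) * (a-1) < 3^k * (a-1) := by
          apply mul_lt_mul_of_pos_right hk (by linarith)
        rw [div_mul_cancel₀] at h1
        · linarith
        · linarith
      exact (iter k).trans (measure_mono (Ioi_subset_Ioi hk'))
    have := ge_of_tendsto' (Ioi_tendsto P) bound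
    exact le_antisymm this zero_le
  have h3 : P (Ioi 3) = 0 := key 3 (by norm_num)
  have := Ioi_step P hP 1
  norm_num [h3] at this
  exact half_fix (measure_ne_top _ _) this

lemma Iio_zero (hP : P = (1 / 2 : ℝ≥0∞) • P.map T1 + (1 / 2 : ℝ≥0∞) • P.map T2) :
    P (Iio 0) = 0 := by
  have key : ∀ a : ℝ, a < 0 → P (Iio a) = 0 := by
    intro a ha
    have step : ∀ b : ℝ, P (Iio b) ≤ P (Iio (3*b)) := by
      intro b
      rw [Iio_step P hP b]
      have h1 : P (Iio (3*b-2)) ≤ P (Iio (3*b)) :=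
        measure_mono (Iio_subset_Iio (by linarith))
      calc 1/2 * P (Iio (3*b)) + 1/2 * P (Iio (3*b-2))
          ≤ 1/2 * P (Iio (3*b)) + 1/2 * P (Iio (3*b)) := by gcongr
        _ = P (Iio (3*b)) := by
            rw [← add_mul]
            norm_num [ENNReal.inv_two_add_inv_two]
    have iter : ∀ k : ℕ, P (Iio a) ≤ P (Iio (3^k * a)) := by
      intro k
      induction k with
      | zero => simp
      | succ k ih =>
        refine ih.trans ((step _).trans_eq ?_)
        congr 1
        ring
    have bound : ∀ m : ℕ, P (Iio a) ≤ P (Iio (-(m : ℝ))) := by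
      intro m
      obtain ⟨k, hk⟩ := pow_unbounded_of_one_lt ((m:ℝ) / (-a)) (by norm_num : (1:ℝ) < 3)
      have hk' : 3^k * a ≤ -(m:ℝ) := by
        have h1 : (m:ℝ) / (-a) * (-a) < 3^k * (-a) := by
          apply mul_lt_mul_of_pos_right hk (by linarith)
        rw [div_mul_cancel₀] at h1
        · nlinarith
        · linarith
      exact (iter k).trans (measure_mono (Iio_subset_Iio hk'))
    have := ge_of_tendsto' (Iio_tendsto P) bound
    exact le_antisymm this zero_le
  have h3 : P (Iio (-2)) = 0 := key (-2) (by norm_num)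
  have := Iio_step P hP 0
  norm_num [h3] at this
  exact half_fix (measure_ne_top _ _) this

lemma ae_mem_Icc (hP : P = (1 / 2 : ℝ≥0∞) • P.map T1 + (1 / 2 : ℝ≥0∞) • P.map T2) :
    ∀ᵐ x ∂P, x ∈ Icc (0:ℝ) 1 := by
  have h : P (Icc (0:ℝ) 1)ᶜ = 0 := by
    have hsub : (Icc (0:ℝ) 1)ᶜ ⊆ Iio 0 ∪ Ioi 1 := by
      intro x hx
      simp only [mem_compl_iff, mem_Icc, not_and_or, not_le] at hx
      rcases hx with h | h
      · exact Or.inl h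
      · exact Or.inr h
    refine le_antisymm ((measure_mono hsub).trans (le_of_eq ?_)) zero_le
    refine le_antisymm ?_ zero_le
    calc P (Iio 0 ∪ Ioi 1) ≤ P (Iio 0) + P (Ioi 1) := measure_union_le _ _
      _ = 0 := by rw [Iio_zero P hP, Ioi_zero P hP, add_zero]
  exact h


lemma rho_nonneg (x : ℝ) (p : ℝ × ℝ) : 0 ≤ rho x p := by
  unfold rho; positivity

/-- infimum over set-coercion equals `Finset.inf'`. -/
lemma iInf_coe_eq_inf' (s : Finset (ℝ × ℝ)) (h : s.Nonempty) (x : ℝ) :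
    (⨅ a : (↑s : Set (ℝ × ℝ)), rho x (a : ℝ × ℝ)) = s.inf' h (fun a => rho x a) := by
  rw [Finset.inf'_eq_csInf_image, iInf, ← Set.image_eq_range]

lemma cont_inf (s : Finset (ℝ × ℝ)) (h : s.Nonempty) :
    Continuous (fun x => s.inf' h (fun a => rho x a)) := by
  induction h using Finset.Nonempty.cons_induction with
  | singleton a =>
    have : (fun x => ({a} : Finset (ℝ×ℝ)).inf' (Finset.singleton_nonempty a) (fun b => rho x b)) = fun x => rho x a := by
      funext x; simp
    rw [this]; unfold rho; continuity
  | cons a s ha hs ih =>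
    have : (fun x => (Finset.cons a s ha).inf' (Finset.cons_nonempty ha) (fun b => rho x b))
        = fun x => min (rho x a) (s.inf' hs (fun b => rho x b)) := by
      funext x; rw [Finset.inf'_cons (H := hs)]
    rw [this]
    exact Continuous.min (by unfold rho; continuity) ih

lemma inf'_nonneg (s : Finset (ℝ × ℝ)) (h : s.Nonempty) (x : ℝ) :
    0 ≤ s.inf' h (fun a => rho x a) := by
  obtain ⟨a, ha, hval⟩ := s.exists_mem_eq_inf' h (fun a => rho x a)
  rw [hval]; exact rho_nonneg x a

/-- points with first coord in `[0,1]` and `|second| ≤ 1`. -/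
def Good (s : Finset (ℝ × ℝ)) : Prop := ∀ p ∈ s, p.1 ∈ Icc (0:ℝ) 1 ∧ |p.2| ≤ 1

lemma inf'_bound (s : Finset (ℝ × ℝ)) (h : s.Nonempty) (hg : Good s)
    {x : ℝ} (hx : x ∈ Icc (0:ℝ) 1) : |s.inf' h (fun a => rho x a)| ≤ 2 := by
  obtain ⟨a, ha⟩ := h
  rw [abs_le]
  constructor
  · linarith [inf'_nonneg s ⟨a, ha⟩ x]
  · refine (Finset.inf'_le _ ha).trans ?_
    obtain ⟨⟨h1, h2⟩, h3⟩ := hg a ha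
    obtain ⟨hx1, hx2⟩ := hx
    have : (x - a.1)^2 ≤ 1 := by nlinarith
    have h4 : a.2^2 ≤ 1 := by
      rw [← sq_abs]; nlinarith [abs_nonneg a.2]
    unfold rho; nlinarith

lemma integrable_of_bdd (hP : P = (1 / 2 : ℝ≥0∞) • P.map T1 + (1 / 2 : ℝ≥0∞) • P.map T2)
    {u : ℝ → ℝ} (hu : Continuous u) (hb : ∀ x ∈ Icc (0:ℝ) 1, |u x| ≤ 2) :
    Integrable u P := by
  refine Integrable.mono' (integrable_const 2) hu.aestronglyMeasurable ?_
  filter_upwards [ae_mem_Icc P hP] with x hx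
  exact hb x hx

lemma inf'_affine {ι : Type*} (s : Finset ι) (h : s.Nonempty) (g : ι → ℝ) (c d : ℝ)
    (hc : 0 ≤ c) : s.inf' h (fun i => c * g i + d) = c * s.inf' h g + d := by
  induction h using Finset.Nonempty.cons_induction with
  | singleton a => simp
  | cons a s ha hs ih =>
    rw [Finset.inf'_cons (H := hs), Finset.inf'_cons (H := hs), ih]
    rcases le_total (g a) (s.inf' hs g) with h' | h'
    · rw [min_eq_left h', min_eq_left (by nlinarith)]
    · rw [min_eq_right h', min_eq_right (by nlinarith)]

/-- inf' of pointwise-dominated functions. -/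
lemma inf'_mono_fun {ι : Type*} (s : Finset ι) (h : s.Nonempty) {f g : ι → ℝ}
    (hfg : ∀ i ∈ s, f i ≤ g i) : s.inf' h f ≤ s.inf' h g := by
  obtain ⟨a, ha, hval⟩ := s.exists_mem_eq_inf' h g
  rw [hval]
  exact (Finset.inf'_le _ ha).trans (hfg a ha)

lemma integral_selfsim (hP : P = (1 / 2 : ℝ≥0∞) • P.map T1 + (1 / 2 : ℝ≥0∞) • P.map T2)
    (f : ℝ → ℝ) (hf : Continuous f)
    (h1 : Integrable (fun x => f (T1 x)) P) (h2 : Integrable (fun x => f (T2 x)) P) :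
    ∫ x, f x ∂P = (1/2) * ∫ x, f (T1 x) ∂P + (1/2) * ∫ x, f (T2 x) ∂P := by
  have m1 : Integrable f (P.map T1) :=
    (integrable_map_measure hf.aestronglyMeasurable measurable_T1.aemeasurable).2 h1
  have m2 : Integrable f (P.map T2) :=
    (integrable_map_measure hf.aestronglyMeasurable measurable_T2.aemeasurable).2 h2
  have e1 : ∫ x, f x ∂(P.map T1) = ∫ x, f (T1 x) ∂P :=
    integral_map measurable_T1.aemeasurable hf.aestronglyMeasurable
  have e2 : ∫ x, f x ∂(P.map T2) = ∫ x, f (T2 x) ∂P :=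
    integral_map measurable_T2.aemeasurable hf.aestronglyMeasurable
  conv_lhs => rw [hP]
  rw [integral_add_measure (m1.smul_measure (by norm_num)) (m2.smul_measure (by norm_num)),
    integral_smul_measure, integral_smul_measure, e1, e2]
  norm_num [smul_eq_mul]




lemma distortion_eq_inf' (s : Finset (ℝ × ℝ)) (h : s.Nonempty) :
    distortion P (↑s : Set (ℝ × ℝ)) = ∫ x, s.inf' h (fun a => rho x a) ∂P := by
  unfold distortion
  congr 1
  funext x
  exact iInf_coe_eq_inf' s h x

lemma distortion_nonneg (s : Finset (ℝ × ℝ)) (h : s.Nonempty) :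
    0 ≤ distortion P (↑s : Set (ℝ × ℝ)) := by
  rw [distortion_eq_inf' P s h]
  exact integral_nonneg (fun x => inf'_nonneg s h x)

/-- points of candidate sets are good, with height between 1/m and 1 -/
lemma mem_union_Sj {m : ℕ} (hm : 1 ≤ m) {p : ℝ × ℝ}
    (hp : p ∈ ⋃ j ∈ Finset.Icc 1 m, Sj j) :
    p.1 ∈ Icc (0:ℝ) 1 ∧ 1/(m:ℝ) ≤ p.2 ∧ p.2 ≤ 1 := by
  simp only [mem_iUnion, exists_prop] at hp
  obtain ⟨j, hj, hp1, hp2⟩ := hp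
  rw [Finset.mem_Icc] at hj
  obtain ⟨hj1, hj2⟩ := hj
  have hj0 : (0:ℝ) < j := by exact_mod_cast hj1
  have hm0 : (0:ℝ) < m := by exact_mod_cast lt_of_lt_of_le Nat.zero_lt_one hm
  refine ⟨hp1, ?_, ?_⟩
  · rw [hp2]
    apply one_div_le_one_div_of_le hj0
    exact_mod_cast hj2
  · rw [hp2]
    rw [div_le_one hj0]
    exact_mod_cast hj1

lemma good_of_sub {m : ℕ} (hm : 1 ≤ m) (s : Finset (ℝ × ℝ))
    (hs : (↑s : Set (ℝ × ℝ)) ⊆ ⋃ j ∈ Finset.Icc 1 m, Sj j) : Good s := by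
  intro p hp
  obtain ⟨h1, h2, h3⟩ := mem_union_Sj hm (hs hp)
  have hm0 : (0:ℝ) < m := by exact_mod_cast lt_of_lt_of_le Nat.zero_lt_one hm
  have hpos : (0:ℝ) < 1/(m:ℝ) := by positivity
  exact ⟨h1, abs_le.2 ⟨by linarith, h3⟩⟩

lemma setV_nonempty {m : ℕ} (hm : 1 ≤ m) :
    {e : ℝ | ∃ α : Finset (ℝ × ℝ), α.Nonempty ∧ α.card ≤ m ∧
      (↑α : Set (ℝ × ℝ)) ⊆ ⋃ j ∈ Finset.Icc 1 m, Sj j ∧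
      e = distortion P (↑α : Set (ℝ × ℝ))}.Nonempty := by
  refine ⟨distortion P (↑({((0:ℝ),(1/(m:ℝ)))} : Finset (ℝ × ℝ)) : Set (ℝ × ℝ)),
    {((0:ℝ),(1/(m:ℝ)))}, Finset.singleton_nonempty _, by simpa using hm, ?_, rfl⟩
  intro p hp
  simp only [Finset.coe_singleton, Set.mem_singleton_iff] at hp
  subst hp
  simp only [mem_iUnion, exists_prop]
  exact ⟨m, Finset.mem_Icc.2 ⟨hm, le_refl m⟩, ⟨by norm_num, rfl⟩⟩

lemma setV_bddBelow (m : ℕ) :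
    BddBelow {e : ℝ | ∃ α : Finset (ℝ × ℝ), α.Nonempty ∧ α.card ≤ m ∧
      (↑α : Set (ℝ × ℝ)) ⊆ ⋃ j ∈ Finset.Icc 1 m, Sj j ∧
      e = distortion P (↑α : Set (ℝ × ℝ))} := by
  refine ⟨0, fun e he => ?_⟩
  obtain ⟨δ, hδne, -, -, rfl⟩ := he
  exact distortion_nonneg P δ hδne

lemma Vc_le {m : ℕ} (δ : Finset (ℝ × ℝ)) (hδne : δ.Nonempty) (hδc : δ.card ≤ m)
    (hδs : (↑δ : Set (ℝ × ℝ)) ⊆ ⋃ j ∈ Finset.Icc 1 m, Sj j) :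
    Vc P m ≤ distortion P (↑δ : Set (ℝ × ℝ)) :=
  csInf_le (setV_bddBelow P m) ⟨δ, hδne, hδc, hδs, rfl⟩

lemma pointwise_scale_le {k n : ℕ} (hk : 1 ≤ k) (c y : ℝ)
    (δ : Finset (ℝ × ℝ)) (hδne : δ.Nonempty)
    (hδ2 : ∀ p ∈ δ, 1/(k:ℝ) ≤ p.2) :
    (δ.image (fun p => (p.1/3 + c, 1/(n:ℝ)))).inf' (hδne.image _)
        (fun a => rho (y/3 + c) a)
      ≤ 1/9 * δ.inf' hδne (fun a => rho y a) + (1/(n:ℝ)^2 - 1/(9*(k:ℝ)^2)) := by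
  have hk0 : (0:ℝ) < k := by exact_mod_cast lt_of_lt_of_le Nat.zero_lt_one hk
  rw [Finset.inf'_image]
  calc δ.inf' _ ((fun a => rho (y/3+c) a) ∘ (fun p => (p.1/3 + c, 1/(n:ℝ))))
      ≤ δ.inf' hδne (fun p => 1/9 * rho y p + (1/(n:ℝ)^2 - 1/(9*(k:ℝ)^2))) := by
        apply inf'_mono_fun
        intro p hp
        have h2 := hδ2 p hp
        have h0 : (0:ℝ) < 1/(k:ℝ) := by positivity
        have hsq : ((k:ℝ)⁻¹)^2 ≤ p.2^2 := by
          rw [← one_div]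
          nlinarith
        simp only [Function.comp, rho]
        ring_nf
        nlinarith [hsq]
    _ = 1/9 * δ.inf' hδne (fun a => rho y a) + (1/(n:ℝ)^2 - 1/(9*(k:ℝ)^2)) :=
        inf'_affine δ hδne _ _ _ (by norm_num)

lemma pointwise_scale_eq {k n : ℕ} (c y : ℝ)
    (β : Finset (ℝ × ℝ)) (hne : β.Nonempty)
    (hβ2 : ∀ p ∈ β, p.2 = 1/(n:ℝ)) :
    β.inf' hne (fun a => rho (y/3 + c) a)
      = 1/9 * (β.image (fun p => (3*p.1 - 3*c, 1/(k:ℝ)))).inf' (hne.image _)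
          (fun a => rho y a)
        + (1/(n:ℝ)^2 - 1/(9*(k:ℝ)^2)) := by
  rw [Finset.inf'_image,
    ← inf'_affine β hne ((fun a => rho y a) ∘ (fun p => (3*p.1 - 3*c, 1/(k:ℝ))))
      (1/9) (1/(n:ℝ)^2 - 1/(9*(k:ℝ)^2)) (by norm_num)]
  refine Finset.inf'_congr (H := hne) rfl (fun p hp => ?_)
  have h2 := hβ2 p hp
  simp only [Function.comp, rho, h2]
  ring

lemma integrable_inf_comp (hP : P = (1 / 2 : ℝ≥0∞) • P.map T1 + (1 / 2 : ℝ≥0∞) • P.map T2)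
    (s : Finset (ℝ × ℝ)) (h : s.Nonempty) (hg : Good s) (c : ℝ) (hc0 : 0 ≤ c)
    (hc1 : c ≤ 2/3) :
    Integrable (fun y => s.inf' h (fun a => rho (y/3 + c) a)) P := by
  refine integrable_of_bdd P hP ?_ ?_
  · exact (cont_inf s h).comp ((continuous_id.div_const 3).add continuous_const)
  · intro x hx
    obtain ⟨hx0, hx1⟩ := hx
    exact inf'_bound s h hg ⟨by linarith, by linarith⟩

lemma integrable_inf (hP : P = (1 / 2 : ℝ≥0∞) • P.map T1 + (1 / 2 : ℝ≥0∞) • P.map T2)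
    (s : Finset (ℝ × ℝ)) (h : s.Nonempty) (hg : Good s) :
    Integrable (fun y => s.inf' h (fun a => rho y a)) P :=
  integrable_of_bdd P hP (cont_inf s h) (fun x hx => inf'_bound s h hg hx)

lemma good_image_scale {n : ℕ} (hn : 1 ≤ n) (δ : Finset (ℝ × ℝ)) (hδg : Good δ)
    (c : ℝ) (hc0 : 0 ≤ c) (hc1 : c ≤ 2/3) :
    Good (δ.image (fun p => (p.1/3 + c, 1/(n:ℝ)))) := by
  intro q hq
  simp only [Finset.mem_image] at hq
  obtain ⟨p, hp, rfl⟩ := hq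
  obtain ⟨⟨h1, h2⟩, h3⟩ := hδg p hp
  have hn0 : (0:ℝ) < n := by exact_mod_cast lt_of_lt_of_le Nat.zero_lt_one hn
  have hn1 : 1/(n:ℝ) ≤ 1 := by
    rw [div_le_one hn0]; exact_mod_cast hn
  constructor
  · constructor <;> simp only <;> [linarith; linarith]
  · simp only
    rw [abs_le]
    have : (0:ℝ) < 1/(n:ℝ) := by positivity
    constructor <;> linarith

lemma inf'_mono'' {s₁ s₂ : Finset (ℝ×ℝ)} (h : s₁ ⊆ s₂) (h₁ : s₁.Nonempty)
    (h₂ : s₂.Nonempty) (f : ℝ×ℝ → ℝ) : s₂.inf' h₂ f ≤ s₁.inf' h₁ f :=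
  Finset.le_inf' _ _ fun b hb => Finset.inf'_le _ (h hb)

lemma integral_affine (hP : P = (1 / 2 : ℝ≥0∞) • P.map T1 + (1 / 2 : ℝ≥0∞) • P.map T2)
    (s : Finset (ℝ × ℝ)) (h : s.Nonempty) (hg : Good s) (d : ℝ) :
    ∫ y, (1/9 * s.inf' h (fun a => rho y a) + d) ∂P
      = 1/9 * distortion P (↑s : Set (ℝ × ℝ)) + d := by
  rw [integral_add ((integrable_inf P hP s h hg).const_mul _) (integrable_const d),
    integral_const_mul, integral_const, distortion_eq_inf' P s h]
  simp [measure_univ]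

lemma Vc_upper (hP : P = (1 / 2 : ℝ≥0∞) • P.map T1 + (1 / 2 : ℝ≥0∞) • P.map T2)
    {n k m : ℕ} (hk : 1 ≤ k) (hm : 1 ≤ m) (hkm : k + m = n)
    (δ ε : Finset (ℝ × ℝ)) (hδne : δ.Nonempty) (hεne : ε.Nonempty)
    (hδc : δ.card ≤ k) (hεc : ε.card ≤ m)
    (hδs : (↑δ : Set (ℝ×ℝ)) ⊆ ⋃ j ∈ Finset.Icc 1 k, Sj j)
    (hεs : (↑ε : Set (ℝ×ℝ)) ⊆ ⋃ j ∈ Finset.Icc 1 m, Sj j) :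
    Vc P n ≤ 1/18 * (distortion P (↑δ : Set (ℝ×ℝ)) + distortion P (↑ε : Set (ℝ×ℝ))
        - 1/(k:ℝ)^2 - 1/(m:ℝ)^2) + 1/(n:ℝ)^2 := by
  classical
  have hn : 1 ≤ n := by omega
  have hδg : Good δ := good_of_sub hk δ hδs
  have hεg : Good ε := good_of_sub hm ε hεs
  have hδ2 : ∀ p ∈ δ, 1/(k:ℝ) ≤ p.2 := fun p hp => (mem_union_Sj hk (hδs hp)).2.1
  have hε2 : ∀ p ∈ ε, 1/(m:ℝ) ≤ p.2 := fun p hp => (mem_union_Sj hm (hεs hp)).2.1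
  set σ : Finset (ℝ × ℝ) :=
    (δ.image (fun p => (p.1/3 + (0:ℝ), 1/(n:ℝ)))) ∪
    (ε.image (fun p => (p.1/3 + (2/3:ℝ), 1/(n:ℝ)))) with hσdef
  have hσne : σ.Nonempty := ((hδne.image _).mono Finset.subset_union_left)
  have hσg : Good σ := by
    intro p hp
    rw [hσdef, Finset.mem_union] at hp
    rcases hp with hp | hp
    · exact good_image_scale hn δ hδg 0 le_rfl (by norm_num) p hp
    · exact good_image_scale hn ε hεg (2/3) (by norm_num) le_rfl p hp
  have hσsub : (↑σ : Set (ℝ×ℝ)) ⊆ ⋃ j ∈ Finset.Icc 1 n, Sj j := by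
    intro p hp
    simp only [mem_iUnion, exists_prop]
    refine ⟨n, Finset.mem_Icc.2 ⟨hn, le_rfl⟩, (hσg p hp).1, ?_⟩
    have hp' := hp
    rw [Finset.mem_coe, hσdef, Finset.mem_union] at hp'
    rcases hp' with hp' | hp' <;>
    · simp only [Finset.mem_image] at hp'
      obtain ⟨q, -, rfl⟩ := hp'
      rfl
  have hσcard : σ.card ≤ n := by
    calc σ.card ≤ (δ.image (fun p => (p.1/3 + (0:ℝ), 1/(n:ℝ)))).card
        + (ε.image (fun p => (p.1/3 + (2/3:ℝ), 1/(n:ℝ)))).card := Finset.card_union_le _ _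
      _ ≤ δ.card + ε.card := add_le_add (Finset.card_image_le) (Finset.card_image_le)
      _ ≤ k + m := add_le_add hδc hεc
      _ = n := hkm
  have hVle : Vc P n ≤ distortion P (↑σ : Set (ℝ×ℝ)) := Vc_le P σ hσne hσcard hσsub
  -- self-similar decomposition
  have hT1 : (fun y => σ.inf' hσne (fun a => rho (T1 y) a))
      = fun y => σ.inf' hσne (fun a => rho (y/3 + 0) a) := by
    funext y; simp [T1]
  have hT2 : (fun y => σ.inf' hσne (fun a => rho (T2 y) a))
      = fun y => σ.inf' hσne (fun a => rho (y/3 + 2/3) a) := by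
    funext y; simp [T2]
  have hstep : distortion P (↑σ : Set (ℝ×ℝ))
      = 1/2 * ∫ y, σ.inf' hσne (fun a => rho (y/3 + 0) a) ∂P
      + 1/2 * ∫ y, σ.inf' hσne (fun a => rho (y/3 + 2/3) a) ∂P := by
    rw [distortion_eq_inf' P σ hσne,
      integral_selfsim P hP _ (cont_inf σ hσne)
        (by rw [show (fun x => (fun x => σ.inf' hσne fun a => rho x a) (T1 x)) =
              (fun y => σ.inf' hσne (fun a => rho (T1 y) a)) from rfl, hT1]
            exact integrable_inf_comp P hP σ hσne hσg 0 le_rfl (by norm_num))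
        (by rw [show (fun x => (fun x => σ.inf' hσne fun a => rho x a) (T2 x)) =
              (fun y => σ.inf' hσne (fun a => rho (T2 y) a)) from rfl, hT2]
            exact integrable_inf_comp P hP σ hσne hσg (2/3) (by norm_num) le_rfl)]
    rw [show (fun x => (fun x => σ.inf' hσne fun a => rho x a) (T1 x)) =
          (fun y => σ.inf' hσne (fun a => rho (T1 y) a)) from rfl, hT1,
        show (fun x => (fun x => σ.inf' hσne fun a => rho x a) (T2 x)) =
          (fun y => σ.inf' hσne (fun a => rho (T2 y) a)) from rfl, hT2]
  have hbound1 : ∫ y, σ.inf' hσne (fun a => rho (y/3 + 0) a) ∂P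
      ≤ 1/9 * distortion P (↑δ : Set (ℝ×ℝ)) + (1/(n:ℝ)^2 - 1/(9*(k:ℝ)^2)) := by
    rw [← integral_affine P hP δ hδne hδg]
    refine integral_mono (integrable_inf_comp P hP σ hσne hσg 0 le_rfl (by norm_num))
      (((integrable_inf P hP δ hδne hδg).const_mul _).add (integrable_const _)) ?_
    intro y
    exact (inf'_mono'' Finset.subset_union_left (hδne.image _) hσne _).trans
      (pointwise_scale_le hk 0 y δ hδne hδ2)
  have hbound2 : ∫ y, σ.inf' hσne (fun a => rho (y/3 + 2/3) a) ∂P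
      ≤ 1/9 * distortion P (↑ε : Set (ℝ×ℝ)) + (1/(n:ℝ)^2 - 1/(9*(m:ℝ)^2)) := by
    rw [← integral_affine P hP ε hεne hεg]
    refine integral_mono (integrable_inf_comp P hP σ hσne hσg (2/3) (by norm_num) le_rfl)
      (((integrable_inf P hP ε hεne hεg).const_mul _).add (integrable_const _)) ?_
    intro y
    exact (inf'_mono'' Finset.subset_union_right (hεne.image _) hσne _).trans
      (pointwise_scale_le hm (2/3) y ε hεne hε2)
  have hfinal : distortion P (↑σ : Set (ℝ×ℝ)) ≤ 1/18 * (distortion P (↑δ : Set (ℝ×ℝ))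
      + distortion P (↑ε : Set (ℝ×ℝ)) - 1/(k:ℝ)^2 - 1/(m:ℝ)^2) + 1/(n:ℝ)^2 := by
    rw [hstep]
    have e1 : 1/(9*(k:ℝ)^2) = 1/9 * (1/(k:ℝ)^2) := by ring
    have e2 : 1/(9*(m:ℝ)^2) = 1/9 * (1/(m:ℝ)^2) := by ring
    linarith
  exact hVle.trans hfinal

lemma inf_select_left [DecidableEq (ℝ×ℝ)] (x : ℝ) (hx : x ∈ Icc (0:ℝ) (1/3)) (n : ℕ)
    (β₁ β₂ : Finset (ℝ×ℝ)) (h₁ : β₁.Nonempty) (h₂ : β₂.Nonempty) (H : (β₁ ∪ β₂).Nonempty)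
    (hb₁ : ∀ p ∈ β₁, p.1 ∈ Icc (0:ℝ) (1/3) ∧ p.2 = 1/(n:ℝ))
    (hb₂ : ∀ p ∈ β₂, p.1 ∈ Icc (2/3:ℝ) 1 ∧ p.2 = 1/(n:ℝ)) :
    (β₁ ∪ β₂).inf' H (fun a => rho x a) = β₁.inf' h₁ (fun a => rho x a) := by
  rw [Finset.inf'_union h₁ h₂]
  apply min_eq_left
  obtain ⟨a, ha⟩ := h₁
  refine (Finset.inf'_le _ ha).trans (Finset.le_inf' _ _ fun c hc => ?_)
  obtain ⟨⟨ha1, ha2⟩, ha3⟩ := hb₁ a ha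
  obtain ⟨⟨hc1, hc2⟩, hc3⟩ := hb₂ c hc
  obtain ⟨hx1, hx2⟩ := hx
  unfold rho
  rw [ha3, hc3]
  have h3 : x - a.1 ≤ 1/3 := by linarith
  have h4 : a.1 - x ≤ 1/3 := by linarith
  have h5 : 1/3 ≤ c.1 - x := by linarith
  nlinarith [h3, h4, h5]

lemma inf_select_right [DecidableEq (ℝ×ℝ)] (x : ℝ) (hx : x ∈ Icc (2/3:ℝ) 1) (n : ℕ)
    (β₁ β₂ : Finset (ℝ×ℝ)) (h₁ : β₁.Nonempty) (h₂ : β₂.Nonempty) (H : (β₁ ∪ β₂).Nonempty)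
    (hb₁ : ∀ p ∈ β₁, p.1 ∈ Icc (0:ℝ) (1/3) ∧ p.2 = 1/(n:ℝ))
    (hb₂ : ∀ p ∈ β₂, p.1 ∈ Icc (2/3:ℝ) 1 ∧ p.2 = 1/(n:ℝ)) :
    (β₁ ∪ β₂).inf' H (fun a => rho x a) = β₂.inf' h₂ (fun a => rho x a) := by
  rw [Finset.inf'_union h₁ h₂]
  apply min_eq_right
  obtain ⟨c, hc⟩ := h₂
  refine (Finset.inf'_le _ hc).trans (Finset.le_inf' _ _ fun a ha => ?_)
  obtain ⟨⟨ha1, ha2⟩, ha3⟩ := hb₁ a ha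
  obtain ⟨⟨hc1, hc2⟩, hc3⟩ := hb₂ c hc
  obtain ⟨hx1, hx2⟩ := hx
  unfold rho
  rw [ha3, hc3]
  have h3 : x - c.1 ≤ 1/3 := by linarith
  have h4 : c.1 - x ≤ 1/3 := by linarith
  have h5 : 1/3 ≤ x - a.1 := by linarith
  nlinarith [h3, h4, h5]

lemma integrable_inf_T1 (hP : P = (1 / 2 : ℝ≥0∞) • P.map T1 + (1 / 2 : ℝ≥0∞) • P.map T2)
    (s : Finset (ℝ × ℝ)) (h : s.Nonempty) (hg : Good s) :
    Integrable (fun y => s.inf' h (fun a => rho (T1 y) a)) P := by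
  refine integrable_of_bdd P hP ((cont_inf s h).comp (continuous_id.div_const 3)) ?_
  intro x hx
  obtain ⟨hx0, hx1⟩ := hx
  exact inf'_bound s h hg ⟨by simp [T1]; linarith, by simp [T1]; linarith⟩

lemma integrable_inf_T2 (hP : P = (1 / 2 : ℝ≥0∞) • P.map T1 + (1 / 2 : ℝ≥0∞) • P.map T2)
    (s : Finset (ℝ × ℝ)) (h : s.Nonempty) (hg : Good s) :
    Integrable (fun y => s.inf' h (fun a => rho (T2 y) a)) P := by
  refine integrable_of_bdd P hP
    ((cont_inf s h).comp ((continuous_id.div_const 3).add continuous_const)) ?_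
  intro x hx
  obtain ⟨hx0, hx1⟩ := hx
  exact inf'_bound s h hg ⟨by simp [T2]; linarith, by simp [T2]; linarith⟩

theorem quantization_error_recursion (P : Measure ℝ) [IsProbabilityMeasure P]
    (hP : P = (1 / 2 : ℝ≥0∞) • P.map T1 + (1 / 2 : ℝ≥0∞) • P.map T2)
    (n n₁ : ℕ) (hn : 2 ≤ n) (hn₁ : 1 ≤ n₁) (hn₁n : n₁ < n)
    (α : Finset (ℝ × ℝ)) (hne : α.Nonempty) (hcard : α.card ≤ n)
    (hsubS : (↑α : Set (ℝ × ℝ)) ⊆ Sj n)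
    (hopt : distortion P (↑α : Set (ℝ × ℝ)) = Vc P n)
    (β₁ β₂ : Finset (ℝ × ℝ))
    (hβ₁ : (↑β₁ : Set (ℝ × ℝ)) = ↑α ∩ {p : ℝ × ℝ | p.1 ∈ Icc (0 : ℝ) (1 / 3)})
    (hβ₂ : (↑β₂ : Set (ℝ × ℝ)) = ↑α ∩ {p : ℝ × ℝ | p.1 ∈ Icc (2 / 3 : ℝ) 1})
    (hcard₁ : β₁.card = n₁) (hcard₂ : β₂.card = n - n₁) :
    Vc P n =
      (1 / 18) * (Vc P n₁ + Vc P (n - n₁) - 1 / (n₁ : ℝ) ^ 2 - 1 / ((n - n₁ : ℕ) : ℝ) ^ 2) +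
        1 / (n : ℝ) ^ 2 := by
  classical
  set m : ℕ := n - n₁ with hmdef
  have hm : 1 ≤ m := by omega
  have hnm : n₁ + m = n := by omega
  have hαpt : ∀ p ∈ α, p.1 ∈ Icc (0:ℝ) 1 ∧ p.2 = 1/(n:ℝ) := fun p hp => hsubS hp
  have hβ₁sub : β₁ ⊆ α := by
    rw [← Finset.coe_subset, hβ₁]; exact inter_subset_left
  have hβ₂sub : β₂ ⊆ α := by
    rw [← Finset.coe_subset, hβ₂]; exact inter_subset_left
  have hb₁ : ∀ p ∈ β₁, p.1 ∈ Icc (0:ℝ) (1/3) ∧ p.2 = 1/(n:ℝ) := by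
    intro p hp
    have hmem : (p : ℝ×ℝ) ∈ (↑β₁ : Set (ℝ×ℝ)) := hp
    rw [hβ₁] at hmem
    exact ⟨hmem.2, (hαpt p (hβ₁sub hp)).2⟩
  have hb₂ : ∀ p ∈ β₂, p.1 ∈ Icc (2/3:ℝ) 1 ∧ p.2 = 1/(n:ℝ) := by
    intro p hp
    have hmem : (p : ℝ×ℝ) ∈ (↑β₂ : Set (ℝ×ℝ)) := hp
    rw [hβ₂] at hmem
    exact ⟨hmem.2, (hαpt p (hβ₂sub hp)).2⟩
  have hβ₁ne : β₁.Nonempty := Finset.card_pos.1 (by omega)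
  have hβ₂ne : β₂.Nonempty := Finset.card_pos.1 (by omega)
  have hdisj : Disjoint β₁ β₂ := Finset.disjoint_left.2 (fun {p} hp1 hp2 => by
    have h1 := (hb₁ p hp1).1.2
    have h2 := (hb₂ p hp2).1.1
    linarith)
  have hαeq : β₁ ∪ β₂ = α := by
    apply Finset.eq_of_subset_of_card_le (Finset.union_subset hβ₁sub hβ₂sub)
    rw [Finset.card_union_of_disjoint hdisj, hcard₁, hcard₂]
    omega
  subst hαeq
  -- the scaled sets
  set γ₁ : Finset (ℝ×ℝ) := β₁.image (fun p => (3*p.1 - 3*(0:ℝ), 1/(n₁:ℝ))) with hγ₁def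
  set γ₂ : Finset (ℝ×ℝ) := β₂.image (fun p => (3*p.1 - 3*(2/3:ℝ), 1/(m:ℝ))) with hγ₂def
  have hγ₁ne : γ₁.Nonempty := hβ₁ne.image _
  have hγ₂ne : γ₂.Nonempty := hβ₂ne.image _
  have hγ₁sub : (↑γ₁ : Set (ℝ×ℝ)) ⊆ ⋃ j ∈ Finset.Icc 1 n₁, Sj j := by
    intro q hq
    rw [Finset.mem_coe, hγ₁def, Finset.mem_image] at hq
    obtain ⟨p, hp, rfl⟩ := hq
    obtain ⟨⟨h1, h2⟩, -⟩ := hb₁ p hp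
    simp only [mem_iUnion, exists_prop]
    exact ⟨n₁, Finset.mem_Icc.2 ⟨hn₁, le_rfl⟩, ⟨by constructor <;> simp <;> linarith, rfl⟩⟩
  have hγ₂sub : (↑γ₂ : Set (ℝ×ℝ)) ⊆ ⋃ j ∈ Finset.Icc 1 m, Sj j := by
    intro q hq
    rw [Finset.mem_coe, hγ₂def, Finset.mem_image] at hq
    obtain ⟨p, hp, rfl⟩ := hq
    obtain ⟨⟨h1, h2⟩, -⟩ := hb₂ p hp
    simp only [mem_iUnion, exists_prop]
    exact ⟨m, Finset.mem_Icc.2 ⟨hm, le_rfl⟩, ⟨by constructor <;> simp <;> linarith, rfl⟩⟩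
  have hγ₁good : Good γ₁ := good_of_sub hn₁ γ₁ hγ₁sub
  have hγ₂good : Good γ₂ := good_of_sub hm γ₂ hγ₂sub
  have hVγ₁ : Vc P n₁ ≤ distortion P (↑γ₁ : Set (ℝ×ℝ)) :=
    Vc_le P γ₁ hγ₁ne (Finset.card_image_le.trans (le_of_eq hcard₁)) hγ₁sub
  have hVγ₂ : Vc P m ≤ distortion P (↑γ₂ : Set (ℝ×ℝ)) :=
    Vc_le P γ₂ hγ₂ne (Finset.card_image_le.trans (le_of_eq hcard₂)) hγ₂sub
  have hugood : Good (β₁ ∪ β₂) := by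
    intro p hp
    obtain ⟨h1, h2⟩ := hαpt p hp
    refine ⟨h1, ?_⟩
    rw [h2, abs_le]
    have hn0 : (0:ℝ) < n := by positivity
    have : (0:ℝ) < 1/(n:ℝ) := by positivity
    have : 1/(n:ℝ) ≤ 1 := by
      rw [div_le_one hn0]; exact_mod_cast (by omega : 1 ≤ n)
    constructor <;> linarith
  -- a.e. pointwise identities
  have haept1 : ∀ᵐ y ∂P, (β₁ ∪ β₂).inf' hne (fun a => rho (T1 y) a)
      = 1/9 * γ₁.inf' hγ₁ne (fun a => rho y a) + (1/(n:ℝ)^2 - 1/(9*(n₁:ℝ)^2)) := by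
    filter_upwards [ae_mem_Icc P hP] with y hy
    obtain ⟨hy0, hy1⟩ := hy
    have hx : T1 y ∈ Icc (0:ℝ) (1/3) := by
      constructor <;> simp [T1] <;> linarith
    rw [inf_select_left (T1 y) hx n β₁ β₂ hβ₁ne hβ₂ne hne hb₁ hb₂]
    have hT : T1 y = y/3 + 0 := by simp [T1]
    rw [hT, pointwise_scale_eq (k := n₁) 0 y β₁ hβ₁ne (fun p hp => (hb₁ p hp).2)]
  have haept2 : ∀ᵐ y ∂P, (β₁ ∪ β₂).inf' hne (fun a => rho (T2 y) a)
      = 1/9 * γ₂.inf' hγ₂ne (fun a => rho y a) + (1/(n:ℝ)^2 - 1/(9*(m:ℝ)^2)) := by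
    filter_upwards [ae_mem_Icc P hP] with y hy
    obtain ⟨hy0, hy1⟩ := hy
    have hx : T2 y ∈ Icc (2/3:ℝ) 1 := by
      constructor <;> simp [T2] <;> linarith
    rw [inf_select_right (T2 y) hx n β₁ β₂ hβ₁ne hβ₂ne hne hb₁ hb₂]
    have hT : T2 y = y/3 + 2/3 := by simp [T2]
    rw [hT, pointwise_scale_eq (k := m) (2/3) y β₂ hβ₂ne (fun p hp => (hb₂ p hp).2)]
  have hint1 : ∫ y, (β₁ ∪ β₂).inf' hne (fun a => rho (T1 y) a) ∂P
      = 1/9 * distortion P (↑γ₁ : Set (ℝ×ℝ)) + (1/(n:ℝ)^2 - 1/(9*(n₁:ℝ)^2)) := by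
    rw [integral_congr_ae haept1, integral_affine P hP γ₁ hγ₁ne hγ₁good]
  have hint2 : ∫ y, (β₁ ∪ β₂).inf' hne (fun a => rho (T2 y) a) ∂P
      = 1/9 * distortion P (↑γ₂ : Set (ℝ×ℝ)) + (1/(n:ℝ)^2 - 1/(9*(m:ℝ)^2)) := by
    rw [integral_congr_ae haept2, integral_affine P hP γ₂ hγ₂ne hγ₂good]
  have hVeq : Vc P n = 1/18 * (distortion P (↑γ₁ : Set (ℝ×ℝ))
      + distortion P (↑γ₂ : Set (ℝ×ℝ)) - 1/(n₁:ℝ)^2 - 1/(m:ℝ)^2) + 1/(n:ℝ)^2 := by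
    rw [← hopt, distortion_eq_inf' P _ hne,
      integral_selfsim P hP _ (cont_inf _ hne)
        (integrable_inf_T1 P hP _ hne hugood) (integrable_inf_T2 P hP _ hne hugood)]
    rw [show (fun x => (fun x => (β₁ ∪ β₂).inf' hne fun a => rho x a) (T1 x)) =
          (fun y => (β₁ ∪ β₂).inf' hne (fun a => rho (T1 y) a)) from rfl,
        show (fun x => (fun x => (β₁ ∪ β₂).inf' hne fun a => rho x a) (T2 x)) =
          (fun y => (β₁ ∪ β₂).inf' hne (fun a => rho (T2 y) a)) from rfl,
        hint1, hint2]
    ring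
  -- upper bound via infimum
  have hle : Vc P n ≤ 1/18 * (Vc P n₁ + Vc P m - 1/(n₁:ℝ)^2 - 1/(m:ℝ)^2) + 1/(n:ℝ)^2 := by
    have h₁ : 18*(Vc P n - 1/(n:ℝ)^2) + 1/(n₁:ℝ)^2 + 1/(m:ℝ)^2 - Vc P m ≤ Vc P n₁ := by
      have : Vc P n₁ = sInf {e : ℝ | ∃ δ : Finset (ℝ × ℝ), δ.Nonempty ∧ δ.card ≤ n₁ ∧
          (↑δ : Set (ℝ × ℝ)) ⊆ ⋃ j ∈ Finset.Icc 1 n₁, Sj j ∧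
          e = distortion P (↑δ : Set (ℝ × ℝ))} := rfl
      rw [this]
      refine le_csInf (setV_nonempty P hn₁) fun e₁ he₁ => ?_
      obtain ⟨δ, hδne, hδc, hδs, rfl⟩ := he₁
      have h₂ : 18*(Vc P n - 1/(n:ℝ)^2) + 1/(n₁:ℝ)^2 + 1/(m:ℝ)^2
          - distortion P (↑δ : Set (ℝ×ℝ)) ≤ Vc P m := by
        have hVm : Vc P m = sInf {e : ℝ | ∃ ε : Finset (ℝ × ℝ), ε.Nonempty ∧ ε.card ≤ m ∧
            (↑ε : Set (ℝ × ℝ)) ⊆ ⋃ j ∈ Finset.Icc 1 m, Sj j ∧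
            e = distortion P (↑ε : Set (ℝ × ℝ))} := rfl
        rw [hVm]
        refine le_csInf (setV_nonempty P hm) fun e₂ he₂ => ?_
        obtain ⟨ε, hεne, hεc, hεs, rfl⟩ := he₂
        have := Vc_upper P hP hn₁ hm hnm δ ε hδne hεne hδc hεc hδs hεs
        linarith
      linarith
    linarith
  -- lower bound
  have hge : 1/18 * (Vc P n₁ + Vc P m - 1/(n₁:ℝ)^2 - 1/(m:ℝ)^2) + 1/(n:ℝ)^2 ≤ Vc P n := by
    rw [hVeq]
    linarith
  linarith
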